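/- For an ascent sequence s of length n with max(s) < n, removing the entry at position max(s)+1 (the entry ealm(s) immediately following the last maximal entry), under the assumption s_{max(s)+2} ≤ ealm(s), yields an ascent sequence s* of length n−1 with asc(s*) = asc(s), max(s*) = max(s), rmin(s*) = rmin(s), rep(s*) = rep(s) − 1, and zero(s*) = zero(s) − 1 if ealm(s) = 0, zero(s*) = zero(s) otherwise. -/

import Mathlib

/-- Number of ascents of a sequence (0-indexed list). -/
def ascStat (s : List ℕ) : ℕ :=
  (List.range (s.length - 1)).countP (fun i => decide (s.getD i 0 < s.getD (i+1) 0))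

/-- Number of repeated entries. -/
def repStat (s : List ℕ) : ℕ := s.length - s.dedup.length

/-- Number of zero entries. -/
def zeroStat (s : List ℕ) : ℕ := s.count 0

/-- Number of maximal entries: positions (0-indexed) i with s_i = i. -/
def maxStat (s : List ℕ) : ℕ :=
  (List.range s.length).countP (fun i => decide (s.getD i 0 = i))

/-- Number of right-to-left minima. -/
def rminStat (s : List ℕ) : ℕ :=
  (List.range s.length).countP
    (fun i => decide (∀ j < s.length, i < j → s.getD i 0 < s.getD j 0))

/-- Inversion sequence: 0-indexed, s_i ≤ i (i.e. 1-indexed 0 ≤ s_i < i). -/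
def IsInvSeq (s : List ℕ) : Prop := ∀ i < s.length, s.getD i 0 ≤ i

/-- Ascent sequence: s_0 = 0 and s_i ≤ asc(s_0,…,s_{i-1}) + 1. -/
def IsAscSeq (s : List ℕ) : Prop :=
  ∀ i < s.length, s.getD i 0 ≤ if i = 0 then 0 else ascStat (s.take i) + 1

namespace RE

lemma asc_single (x : ℕ) : ascStat [x] = 0 := rfl

lemma asc_cons_cons (x y : ℕ) (l : List ℕ) :
    ascStat (x :: y :: l) = (if x < y then 1 else 0) + ascStat (y :: l) := by
  show (List.range (l.length + 1)).countP _ = _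
  rw [List.range_succ_eq_map, List.countP_cons, List.countP_map]
  have hc : List.countP ((fun i => decide ((x :: y :: l).getD i 0 < (x :: y :: l).getD (i+1) 0)) ∘ Nat.succ) (List.range l.length) = ascStat (y :: l) := by
    unfold ascStat
    simp only [List.length_cons, Nat.add_sub_cancel]
    exact List.countP_congr (fun i _ => by simp [Function.comp, List.getD_cons_succ])
  rw [hc]
  simp [List.getD_cons_zero, List.getD_cons_succ]
  omega

lemma asc_le (x : ℕ) (l : List ℕ) : ascStat (x :: l) ≤ l.length := by
  unfold ascStat
  calc _ ≤ (List.range ((x::l).length - 1)).length := List.countP_le_length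
  _ = l.length := by simp

lemma asc_append_cons (u : List ℕ) (x : ℕ) (v : List ℕ) :
    ascStat (u ++ x :: v) = ascStat (u ++ [x]) + ascStat (x :: v) := by
  induction u with
  | nil => simp [asc_single]
  | cons a u ih =>
    cases u with
    | nil =>
      simp only [List.nil_append, List.cons_append, asc_cons_cons, asc_single]
      omega
    | cons c u' =>
      simp only [List.cons_append] at ih ⊢
      rw [asc_cons_cons, asc_cons_cons, ih]
      omega

lemma asc_range_snoc (m x : ℕ) :
    ascStat (List.range (m+1) ++ [x]) = m + if m < x then 1 else 0 := by
  induction m generalizing x with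
  | zero =>
    rw [show List.range 1 ++ [x] = 0 :: x :: [] from rfl, asc_cons_cons, asc_single]
    omega
  | succ k ih =>
    rw [List.range_succ, List.append_assoc, List.singleton_append,
      asc_append_cons, ih]
    have : ascStat [k+1, x] = if k + 1 < x then 1 else 0 := by
      rw [show [k+1,x] = (k+1) :: x :: [] from rfl, asc_cons_cons, asc_single]
      omega
    rw [this, if_pos (Nat.lt_succ_self k)]

lemma asc_range (m : ℕ) : ascStat (List.range (m+1)) = m := by
  cases m with
  | zero => rfl
  | succ k =>
    rw [List.range_succ, asc_range_snoc, if_pos (Nat.lt_succ_self k)]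

lemma asc_range_cons (m x : ℕ) (hx : x < m + 1) (l : List ℕ) :
    ascStat (List.range (m+1) ++ x :: l) = m + ascStat (x :: l) := by
  rw [asc_append_cons, asc_range_snoc, if_neg (by omega)]
  omega

lemma countP_downclosed (n k : ℕ) (P : ℕ → Bool) (hk : k ≤ n)
    (hmem : ∀ i < n, P i = decide (i < k)) :
    (List.range n).countP P = k := by
  rw [show n = k + (n - k) by omega, List.range_add, List.countP_append]
  have h1 : (List.range k).countP P = (List.range k).length := by
    rw [List.countP_eq_length]
    intro a ha
    rw [List.mem_range] at ha
    rw [hmem a (by omega)]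
    simpa using ha
  have h2 : (List.map (fun x => k + x) (List.range (n-k))).countP P = 0 := by
    rw [List.countP_eq_zero]
    intro a ha
    simp only [List.mem_map, List.mem_range] at ha
    obtain ⟨i, hi, rfl⟩ := ha
    rw [hmem _ (by omega)]
    simp
  rw [h1, h2, List.length_range]
  omega

lemma countP_split (m t : ℕ) (P P' : ℕ → Bool)
    (hPm : P m = false)
    (hPlow : ∀ i < m, P' i = P i)
    (hPhigh : ∀ i < t, P' (m + i) = P (m + 1 + i)) :
    (List.range (m + t)).countP P' = (List.range (m + 1 + t)).countP P := by
  rw [List.range_add, List.range_add (n := m+1) (m := t), List.range_succ,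
    List.countP_append, List.countP_append, List.countP_append,
    List.countP_map, List.countP_map]
  have e1 : (List.range m).countP P' = (List.range m).countP P :=
    List.countP_congr (fun i hi => by rw [hPlow i (List.mem_range.mp hi)])
  have e2 : List.countP P [m] = 0 := by
    rw [List.countP_cons, List.countP_nil, hPm]
    simp
  have e3 : (List.range t).countP (P' ∘ (fun x => m + x))
      = (List.range t).countP (P ∘ (fun x => m + 1 + x)) :=
    List.countP_congr (fun i hi => by
      simp only [Function.comp]
      rw [hPhigh i (List.mem_range.mp hi)])
  rw [e1, e2, e3]
  omega

lemma inv_bound (s : List ℕ) (h : IsAscSeq s) : ∀ i < s.length, s.getD i 0 ≤ i := by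
  intro i hi
  have hb := h i hi
  by_cases h0 : i = 0
  · subst h0; simpa using hb
  · rw [if_neg h0] at hb
    have hasc : ascStat (s.take i) ≤ i - 1 := by
      unfold ascStat
      calc _ ≤ (List.range ((s.take i).length - 1)).length := List.countP_le_length
      _ ≤ i - 1 := by simp [List.length_take]; omega
    omega

lemma maximal_down (s : List ℕ) (h : IsAscSeq s) (i : ℕ) (hi : i < s.length)
    (hsi : s.getD i 0 = i) : ∀ j ≤ i, s.getD j 0 = j := by
  by_cases h0 : i = 0
  · subst h0; intro j hj; interval_cases j; exact hsi
  · have hb := h i hi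
    rw [if_neg h0, hsi] at hb
    have hlen : (s.take i).length = i := by simp; omega
    have hcle : ascStat (s.take i) ≤ i - 1 := by
      unfold ascStat
      calc _ ≤ (List.range ((s.take i).length - 1)).length := List.countP_le_length
      _ ≤ i - 1 := by simp [List.length_take]; omega
    have heq : ascStat (s.take i) = i - 1 := by omega
    have hasc : ∀ a ∈ List.range ((s.take i).length - 1),
        decide ((s.take i).getD a 0 < (s.take i).getD (a+1) 0) = true := by
      apply List.countP_eq_length.mp
      show ascStat (s.take i) = _
      rw [heq]
      simp [hlen]
    have hstep : ∀ r, r < i - 1 → s.getD r 0 < s.getD (r+1) 0 := by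
      intro r hr
      have := hasc r (by rw [List.mem_range, hlen]; omega)
      simp only [decide_eq_true_eq] at this
      rwa [List.getD_eq_getElem _ _ (by omega : r < (s.take i).length),
        List.getD_eq_getElem _ _ (by omega : r + 1 < (s.take i).length),
        List.getElem_take, List.getElem_take,
        ← List.getD_eq_getElem s 0 (by omega), ← List.getD_eq_getElem s 0 (by omega)] at this
    have hmono : ∀ j, j ≤ i - 1 → j ≤ s.getD j 0 := by
      intro j
      induction j with
      | zero => omega
      | succ k ih =>
        intro hk
        have h1 := ih (by omega)
        have h2 := hstep k (by omega)
        omega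
    intro j hj
    rcases Nat.eq_or_lt_of_le hj with rfl | hlt
    · exact hsi
    · have h1 := hmono j (by omega)
      have h2 := inv_bound s h j (by omega)
      omega

lemma max_char (s : List ℕ) (h : IsAscSeq s) :
    (∀ i < s.length, (s.getD i 0 = i ↔ i < maxStat s)) := by
  have hex : ∃ k, ¬(k < s.length ∧ s.getD k 0 = k) := ⟨s.length, by omega⟩
  have hQk := Nat.find_spec hex
  set k := Nat.find hex with hk
  have hlt : ∀ i < k, i < s.length ∧ s.getD i 0 = i := by
    intro i hi
    have := Nat.find_min hex hi
    tauto
  have hkn : k ≤ s.length := Nat.find_le (by omega)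
  have hge : ∀ i, k ≤ i → i < s.length → ¬(s.getD i 0 = i) := by
    intro i hki hin hsi
    exact hQk ⟨lt_of_le_of_lt hki hin, maximal_down s h i hin hsi k hki⟩
  have hmax : maxStat s = k := by
    unfold maxStat
    apply countP_downclosed _ _ _ hkn
    intro i hi
    simp only [decide_eq_decide]
    by_cases hik : i < k
    · exact iff_of_true (hlt i hik).2 hik
    · exact iff_of_false (hge i (by omega) hi) hik
  intro i hi
  rw [hmax]
  constructor
  · intro hsi
    by_contra hik
    exact hge i (by omega) hi hsi
  · intro hik
    exact (hlt i hik).2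

end RE

/-- Removing the entry right after the last maximal entry (position max(s),
0-indexed), when it weakly dominates the next entry, yields an ascent
sequence of length n−1 with the stated statistics. -/
theorem remove_ealm_entry (n : ℕ) (s : List ℕ) (hlen : s.length = n)
    (h : IsAscSeq s) (h1 : maxStat s < n) (h2 : maxStat s + 1 < n)
    (h3 : s.getD (maxStat s + 1) 0 ≤ s.getD (maxStat s) 0) :
    IsAscSeq (s.eraseIdx (maxStat s)) ∧
    (s.eraseIdx (maxStat s)).length = n - 1 ∧
    ascStat (s.eraseIdx (maxStat s)) = ascStat s ∧
    maxStat (s.eraseIdx (maxStat s)) = maxStat s ∧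
    rminStat (s.eraseIdx (maxStat s)) = rminStat s ∧
    repStat (s.eraseIdx (maxStat s)) = repStat s - 1 ∧
    zeroStat s = zeroStat (s.eraseIdx (maxStat s)) +
      (if s.getD (maxStat s) 0 = 0 then 1 else 0) := by
  subst hlen
  set m := maxStat s with hm
  have hchar : ∀ i < s.length, (s.getD i 0 = i ↔ i < m) := by
    rw [hm]; exact RE.max_char s h
  have hA := RE.inv_bound s h
  have hn2 : m + 2 ≤ s.length := by omega
  have hm1 : 1 ≤ m := by
    have h0 := h 0 (by omega)
    rw [if_pos rfl] at h0
    have h0' : s.getD 0 0 = 0 := by omega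
    have := (hchar 0 (by omega)).mp h0'
    omega
  set e := s.getD m 0 with he
  set f := s.getD (m+1) 0 with hf
  have hem : e < m := by
    have hb1 : e ≤ m := hA m (by omega)
    have hb2 : ¬(e = m) := fun hc => by have := (hchar m (by omega)).mp hc; omega
    omega
  have hfm : f ≤ e := h3
  set b' := s.drop (m+2) with hb'
  have hlb' : b'.length = s.length - (m+2) := by rw [hb']; simp
  have htakem : s.take m = List.range m := by
    apply List.ext_getElem
    · simp [List.length_take]; omega
    · intro i h1i h2i
      rw [List.getElem_take, List.getElem_range]
      have h3i : i < m := by simpa using h2i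
      have hsi := (hchar i (by omega)).mpr h3i
      rwa [List.getD_eq_getElem s 0 (by omega)] at hsi
  have hdrop : s.drop m = e :: f :: b' := by
    rw [List.drop_eq_getElem_cons (show m < s.length by omega),
      List.drop_eq_getElem_cons (show m + 1 < s.length by omega),
      show m + 1 + 1 = m + 2 by omega, hb', he, hf,
      List.getD_eq_getElem s 0 (n := m) (by omega),
      List.getD_eq_getElem s 0 (n := m + 1) (by omega)]
  have hsplit : s = List.range m ++ e :: f :: b' := by
    conv_lhs => rw [← List.take_append_drop m s]
    rw [htakem, hdrop]
  have herase : s.eraseIdx m = List.range m ++ f :: b' := by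
    rw [List.eraseIdx_eq_take_drop_succ, htakem]
    have hd : s.drop (m+1) = f :: b' := by
      rw [List.drop_eq_getElem_cons (show m + 1 < s.length by omega),
        show m + 1 + 1 = m + 2 by omega, hb', hf,
        List.getD_eq_getElem s 0 (n := m + 1) (by omega)]
    rw [hd]
  have hlen' : (s.eraseIdx m).length = s.length - 1 := by
    rw [List.length_eraseIdx, if_pos (show m < s.length by omega)]
  -- getD computations
  have hcg1 : ∀ (l : List ℕ) (j : ℕ), j < m → (List.range m ++ l).getD j 0 = j := by
    intro l j hj
    rw [List.getD_append _ _ _ _ (by simpa using hj),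
      List.getD_eq_getElem _ 0 (by simpa using hj), List.getElem_range]
  have hcg2 : ∀ (l : List ℕ) (j : ℕ), m ≤ j →
      (List.range m ++ l).getD j 0 = l.getD (j - m) 0 := by
    intro l j hj
    rw [List.getD_append_right _ _ _ _ (by simpa using hj), List.length_range]
  have hg : ∀ j, j < m → s.getD j 0 = j := fun j hj => (hchar j (by omega)).mpr hj
  have hg' : ∀ j, j < m → (s.eraseIdx m).getD j 0 = j := by
    intro j hj
    rw [herase]
    exact hcg1 _ j hj
  have hgs : ∀ j, m ≤ j → (s.eraseIdx m).getD j 0 = s.getD (j+1) 0 := by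
    intro j hj
    rw [herase, hcg2 _ j hj]
    conv_rhs => rw [hsplit]
    rw [hcg2 _ (j+1) (by omega), show j + 1 - m = (j - m) + 1 by omega,
      List.getD_cons_succ]
  have hm' : m = (m - 1) + 1 := by omega
  -- ascent computations
  have hasc_e : ∀ (l : List ℕ),
      ascStat (List.range m ++ e :: f :: l) = (m-1) + ascStat (f :: l) := by
    intro l
    conv_lhs => rw [hm']
    rw [RE.asc_range_cons (m-1) e (by omega), RE.asc_cons_cons, if_neg (by omega)]
    omega
  have hasc_f : ∀ (l : List ℕ),
      ascStat (List.range m ++ f :: l) = (m-1) + ascStat (f :: l) := by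
    intro l
    conv_lhs => rw [hm']
    rw [RE.asc_range_cons (m-1) f (by omega)]
  have hasc_eq : ascStat (s.eraseIdx m) = ascStat s := by
    rw [herase, hasc_f]
    conv_rhs => rw [hsplit]
    rw [hasc_e]
  -- take computations
  have htk1 : ∀ k, k ≤ m → (s.eraseIdx m).take k = List.range k := by
    intro k hk
    rw [herase, List.take_append]
    simp only [List.take_range, List.length_range]
    rw [show k - m = 0 by omega, List.take_zero, List.append_nil,
      inf_eq_left.mpr hk]
  have htk2 : ∀ k, ascStat ((s.eraseIdx m).take (m+1+k))
      = (m-1) + ascStat (f :: b'.take k) := by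
    intro k
    rw [herase, List.take_append,
      List.take_of_length_le (by simp only [List.length_range]; omega), List.length_range,
      show m+1+k-m = k+1 by omega, List.take_succ_cons, hasc_f]
  have htk3 : ∀ k, ascStat (s.take (m+2+k)) = (m-1) + ascStat (f :: b'.take k) := by
    intro k
    conv_lhs => rw [hsplit]
    rw [List.take_append,
      List.take_of_length_le (by simp only [List.length_range]; omega), List.length_range,
      show m+2+k-m = k+2 by omega, List.take_succ_cons, List.take_succ_cons, hasc_e]
  -- the erased list is an ascent sequence
  have hstar : IsAscSeq (s.eraseIdx m) := by
    intro i hi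
    rw [hlen'] at hi
    by_cases hi0 : i = 0
    · subst hi0
      rw [if_pos rfl, hg' 0 (by omega)]
    · rw [if_neg hi0]
      by_cases him : i ≤ m
      · rw [htk1 i him]
        have hri : ascStat (List.range i) = i - 1 := by
          conv_lhs => rw [show i = (i-1)+1 by omega]
          rw [RE.asc_range]
        rw [hri]
        rcases Nat.lt_or_ge i m with h' | h'
        · rw [hg' i h']; omega
        · have hieq : i = m := by omega
          rw [hieq, hgs m le_rfl, ← hf]
          omega
      · push_neg at him
        have h4 := h (i+1) (by omega)
        rw [if_neg (by omega)] at h4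
        rw [show i + 1 = m+2+(i-m-1) by omega, htk3] at h4
        rw [hgs i (by omega)]
        have h6 := htk2 (i - m - 1)
        rw [show m+1+(i-m-1) = i by omega] at h6
        rw [h6]
        rw [show i + 1 = m+2+(i-m-1) by omega]
        exact h4
  -- maxStat
  have hmax : maxStat (s.eraseIdx m) = m := by
    unfold maxStat
    apply RE.countP_downclosed _ _ _ (by rw [hlen']; omega)
    intro i hi
    rw [hlen'] at hi
    simp only [decide_eq_decide]
    rcases Nat.lt_or_ge i m with him | him
    · exact iff_of_true (hg' i him) him
    · apply iff_of_false _ (by omega)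
      rcases Nat.eq_or_lt_of_le him with him' | him'
      · rw [← him', hgs m le_rfl, ← hf]
        omega
      · have h7 := hstar i (by rw [hlen']; omega)
        rw [if_neg (by omega)] at h7
        have h6 := htk2 (i - m - 1)
        rw [show m+1+(i-m-1) = i by omega] at h6
        rw [h6] at h7
        have h8 : ascStat (f :: b'.take (i-m-1)) ≤ i - m - 1 := by
          calc _ ≤ (b'.take (i-m-1)).length := RE.asc_le _ _
          _ ≤ i - m - 1 := by simp
        omega
  -- rminStat
  have hrmin : rminStat (s.eraseIdx m) = rminStat s := by
    obtain ⟨t, ht⟩ : ∃ t, s.length = m + 1 + t := ⟨s.length - m - 1, by omega⟩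
    have ht1 : 1 ≤ t := by omega
    unfold rminStat
    rw [hlen']
    rw [show s.length - 1 = m + t by omega, show s.length = m + 1 + t by omega]
    refine RE.countP_split m t _ _ ?_ ?_ ?_
    · simp only [decide_eq_false_iff_not]
      intro H
      have hc := H (m+1) (by omega) (by omega)
      rw [← he, ← hf] at hc
      omega
    · intro i him
      simp only [decide_eq_decide]
      constructor
      · intro H' j hj hij
        rcases Nat.lt_trichotomy j m with hjm | hjm | hjm
        · rw [hg i him, hg j hjm]
          exact hij
        · have hc := H' m (by omega) (by omega)
          rw [hg' i him, hgs m le_rfl, ← hf] at hc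
          rw [hg i him, hjm, ← he]
          omega
        · have hc := H' (j-1) (by omega) (by omega)
          rw [hg' i him, hgs (j-1) (by omega),
            show j - 1 + 1 = j by omega] at hc
          rw [hg i him]
          exact hc
      · intro H j hj hij
        rcases Nat.lt_or_ge j m with hjm | hjm
        · rw [hg' i him, hg' j hjm]
          exact hij
        · have hc := H (j+1) (by omega) (by omega)
          rw [hg i him] at hc
          rw [hg' i him, hgs j hjm]
          exact hc
    · intro i hit
      simp only [decide_eq_decide]
      constructor
      · intro H' j hj hij
        have hc := H' (j-1) (by omega) (by omega)
        rw [hgs (m+i) (by omega), hgs (j-1) (by omega),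
          show m + i + 1 = m + 1 + i by omega, show j - 1 + 1 = j by omega] at hc
        exact hc
      · intro H j hj hij
        have hc := H (j+1) (by omega) (by omega)
        rw [hgs (m+i) (by omega), hgs j (by omega),
          show m + i + 1 = m + 1 + i by omega]
        exact hc
  -- repStat
  have hrep : repStat (s.eraseIdx m) = repStat s - 1 := by
    have hcard : (s.eraseIdx m).toFinset = s.toFinset := by
      rw [herase]
      conv_rhs => rw [hsplit]
      ext x
      simp only [List.toFinset_append, Finset.mem_union, List.mem_toFinset,
        List.mem_cons, List.mem_range]
      constructor
      · rintro (hx | hx | hx)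
        · tauto
        · tauto
        · tauto
      · rintro (hx | hx | hx | hx)
        · tauto
        · left; omega
        · tauto
        · tauto
    have hdd : s.dedup.length = (s.eraseIdx m).dedup.length := by
      rw [← List.card_toFinset, ← List.card_toFinset, hcard]
    have hsub : (s.eraseIdx m).dedup.length ≤ s.length - 1 := by
      calc _ ≤ (s.eraseIdx m).length := (List.dedup_sublist _).length_le
      _ = s.length - 1 := hlen'
    unfold repStat
    rw [hlen', hdd]
    omega
  -- zeroStat
  have hzero : zeroStat s = zeroStat (s.eraseIdx m) + (if e = 0 then 1 else 0) := by
    unfold zeroStat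
    rw [herase]
    conv_lhs => rw [hsplit]
    simp only [List.count_append, List.count_cons, beq_iff_eq]
    omega
  exact ⟨hstar, by rw [hlen'], hasc_eq, hmax, hrmin, hrep, hzero⟩
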